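/- Fix s ≥ 3 and a relation Γ ⊆ ℕ × ℕ which is the graph of a function on ℕ∖{0}, and suppose (x_1,x_2) ∈ Γ ⟺ ∃ x_3,…,x_s ∈ ℕ, Φ(x_1,…,x_s), where Φ is a conjunction of equations of the forms x_k = 1, x_i + x_j = x_k, x_i · x_j = x_k. Then for every integer n ≥ 6 + 2s there exists a system S_n ⊆ E_n in n variables such that S_n has a solution in non-negative integers, and every solution (x_1,…,x_n) of S_n contains a coordinate equal to Γ(n) + 1; consequently f(n) ≥ Γ(n) + 1. -/
import Mathlib
set_option maxHeartbeats 1000000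


/-- An equation from `E_n`: `x_k = 1`, `x_i + x_j = x_k`, or `x_i * x_j = x_k`. -/
inductive Eqn (n : ℕ) : Type where
  | one (k : Fin n)
  | add (i j k : Fin n)
  | mul (i j k : Fin n)

def Eqn.holds {n : ℕ} (x : Fin n → ℕ) : Eqn n → Prop
  | .one k => x k = 1
  | .add i j k => x i + x j = x k
  | .mul i j k => x i * x j = x k

/-- `x` solves the system `S ⊆ E_n`. -/
def Solves {n : ℕ} (x : Fin n → ℕ) (S : Set (Eqn n)) : Prop :=
  ∀ e ∈ S, e.holds x

/-- Every solvable system `S ⊆ E_n` has a solution with all values `≤ b`. -/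
def IsBound (n b : ℕ) : Prop :=
  ∀ S : Set (Eqn n), (∃ x, Solves x S) → ∃ x, Solves x S ∧ ∀ i, x i ≤ b

/-- `f n` is the smallest such bound. -/
noncomputable def f (n : ℕ) : ℕ := sInf {b | IsBound n b}

/-- `y` is a duplicate of `x`. -/
def Dup {n : ℕ} (x y : Fin n → ℕ) : Prop :=
  (∀ k, x k = 1 → y k = 1) ∧
  (∀ i j k, x i + x j = x k → y i + y j = y k) ∧
  (∀ i j k, x i * x j = x k → y i * y j = y k)

/-- Every `x : ℕⁿ` has a duplicate in `{0,…,b}ⁿ`. -/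
def DupBound (n b : ℕ) : Prop :=
  ∀ x : Fin n → ℕ, ∃ y, Dup x y ∧ ∀ i, y i ≤ b

/-- `f` expressed via duplicates. -/
noncomputable def fdup (n : ℕ) : ℕ := sInf {b | DupBound n b}

/-- `g n m` : smallest `b` such that every `x ∈ {0,…,m-1}ⁿ` has a duplicate in `{0,…,b}ⁿ`. -/
noncomputable def g (n m : ℕ) : ℕ :=
  sInf {b | ∀ x : Fin n → ℕ, (∀ i, x i < m) → ∃ y, Dup x y ∧ ∀ i, y i ≤ b}

instance (n : ℕ) : Finite (Eqn n) := by
  apply Finite.of_injective (fun e : Eqn n => (match e with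
    | .one k => ((0 : Fin 3), k, k, k)
    | .add i j k => (1, i, j, k)
    | .mul i j k => (2, i, j, k)))
  intro a b h
  cases a <;> cases b <;> simp_all

lemma exists_isBound (n : ℕ) : ∃ b, IsBound n b := by
  classical
  let c : Set (Eqn n) → (Fin n → ℕ) := fun S =>
    if h : ∃ x, Solves x S then h.choose else fun _ => 0
  obtain ⟨b, hb⟩ := (Set.finite_range
    (fun S : Set (Eqn n) => Finset.univ.sup (fun i => c S i))).bddAbove
  refine ⟨b, fun S hS => ⟨c S, ?_, fun i => ?_⟩⟩
  · simp only [c, dif_pos hS]; exact hS.choose_spec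
  · exact (Finset.le_sup (Finset.mem_univ i)).trans (hb (Set.mem_range_self S))

def Eqn.map {n N : ℕ} (φ : Fin n → Fin N) : Eqn n → Eqn N
  | .one k => .one (φ k)
  | .add i j k => .add (φ i) (φ j) (φ k)
  | .mul i j k => .mul (φ i) (φ j) (φ k)

def tv (s n m : ℕ) (h : s + 6 + m ≤ n) (i : ℕ) : Fin n := ⟨s + 2 + min i m, by omega⟩
def wv (s n m : ℕ) (h : s + 6 + m ≤ n) : Fin n := ⟨s + 3 + m, by omega⟩
def yv (s n m : ℕ) (h : s + 6 + m ≤ n) : Fin n := ⟨s + 4 + m, by omega⟩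
def uv (s n m : ℕ) (h : s + 6 + m ≤ n) : Fin n := ⟨s + 5 + m, by omega⟩
def embF (s n m : ℕ) (h : s + 6 + m ≤ n) : Fin (s + 3) → Fin n :=
  Fin.castLE (by omega)

def mySys (s n m : ℕ) (h : s + 6 + m ≤ n) (Φ : Set (Eqn (s + 3))) : Set (Eqn n) :=
  (Eqn.map (embF s n m h) '' Φ) ∪
  {e | e = Eqn.one (tv s n m h 1) ∨
       (∃ i, 1 ≤ i ∧ i < m ∧
          e = Eqn.add (tv s n m h i) (tv s n m h 1) (tv s n m h (i+1))) ∨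
       e = Eqn.add (tv s n m h m) (tv s n m h m) (wv s n m h) ∨
       e = (if n % 2 = 0 then Eqn.add (yv s n m h) (yv s n m h) (yv s n m h)
            else Eqn.one (yv s n m h)) ∨
       e = Eqn.add (wv s n m h) (yv s n m h) (embF s n m h ⟨0, by omega⟩) ∨
       e = Eqn.add (embF s n m h ⟨1, by omega⟩) (tv s n m h 1) (uv s n m h)}

def sol (s n m : ℕ) (x' : Fin (s + 3) → ℕ) (G : ℕ) : Fin n → ℕ := fun k =>
  if hk : (k : ℕ) < s + 3 then x' ⟨k, hk⟩
  else if (k : ℕ) ≤ s + 2 + m then (k : ℕ) - (s + 2)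
  else if (k : ℕ) = s + 3 + m then 2 * m
  else if (k : ℕ) = s + 4 + m then n - 2 * m
  else G

lemma sol_emb (s n m : ℕ) (h : s + 6 + m ≤ n) (x' : Fin (s+3) → ℕ) (G : ℕ)
    (k : Fin (s+3)) : sol s n m x' G (embF s n m h k) = x' k := by
  have hc : ((embF s n m h k : Fin n) : ℕ) = (k : ℕ) := rfl
  simp only [sol, hc, dif_pos k.isLt]

lemma sol_tv (s n m : ℕ) (h : s + 6 + m ≤ n) (x' : Fin (s+3) → ℕ) (G : ℕ)
    (i : ℕ) (h1 : 1 ≤ i) (h2 : i ≤ m) : sol s n m x' G (tv s n m h i) = i := by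
  have hc : ((tv s n m h i : Fin n) : ℕ) = s + 2 + i := by
    simp only [tv]; omega
  simp only [sol, hc]
  rw [dif_neg (by omega), if_pos (by omega)]
  omega

lemma sol_wv (s n m : ℕ) (h : s + 6 + m ≤ n) (x' : Fin (s+3) → ℕ) (G : ℕ) :
    sol s n m x' G (wv s n m h) = 2 * m := by
  have hc : ((wv s n m h : Fin n) : ℕ) = s + 3 + m := rfl
  simp only [sol, hc]
  rw [dif_neg (by omega), if_neg (by omega)]
  simp

lemma sol_yv (s n m : ℕ) (h : s + 6 + m ≤ n) (x' : Fin (s+3) → ℕ) (G : ℕ) :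
    sol s n m x' G (yv s n m h) = n - 2 * m := by
  have hc : ((yv s n m h : Fin n) : ℕ) = s + 4 + m := rfl
  simp only [sol, hc]
  rw [dif_neg (by omega), if_neg (by omega), if_neg (by omega)]
  simp

lemma sol_uv (s n m : ℕ) (h : s + 6 + m ≤ n) (x' : Fin (s+3) → ℕ) (G : ℕ) :
    sol s n m x' G (uv s n m h) = G := by
  have hc : ((uv s n m h : Fin n) : ℕ) = s + 5 + m := rfl
  simp only [sol, hc]
  rw [dif_neg (by omega), if_neg (by omega), if_neg (by omega), if_neg (by omega)]

theorem stmt13 (s : ℕ) (Γ : ℕ → ℕ) (Φ : Set (Eqn (s + 3)))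
    (hrep : ∀ x1 x2 : ℕ, 0 < x1 →
      (Γ x1 = x2 ↔ ∃ x : Fin (s + 3) → ℕ,
        x ⟨0, by omega⟩ = x1 ∧ x ⟨1, by omega⟩ = x2 ∧ Solves x Φ)) :
    ∀ n : ℕ, 6 + 2 * (s + 3) ≤ n →
      (∃ S : Set (Eqn n), (∃ x, Solves x S) ∧
        ∀ x : Fin n → ℕ, Solves x S → ∃ i, x i = Γ n + 1) ∧
      Γ n + 1 ≤ f n := by
  intro n hn
  have hn0 : 0 < n := by omega
  have h : s + 6 + n / 2 ≤ n := by omega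
  set m : ℕ := n / 2 with hmdef
  have hm : 1 ≤ m := by omega
  obtain ⟨x', hx'0, hx'1, hx'Φ⟩ := (hrep n (Γ n) hn0).mp rfl
  -- the chosen solution solves the system
  have hsolS : Solves (sol s n m x' (Γ n + 1)) (mySys s n m h Φ) := by
    intro e he
    rcases he with ⟨e₀, he₀, rfl⟩ | hcase
    · have h0 := hx'Φ e₀ he₀
      cases e₀ <;>
        simpa [Eqn.map, Eqn.holds, sol_emb s n m h] using h0
    · rcases hcase with rfl | ⟨i, hi1, him, rfl⟩ | rfl | hif | rfl | rfl
      · show sol s n m x' (Γ n + 1) _ = 1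
        rw [sol_tv s n m h x' _ 1 le_rfl hm]
      · show sol s n m x' (Γ n + 1) _ + sol s n m x' (Γ n + 1) _ = sol s n m x' (Γ n + 1) _
        rw [sol_tv s n m h x' _ i hi1 (by omega),
            sol_tv s n m h x' _ 1 le_rfl hm,
            sol_tv s n m h x' _ (i+1) (by omega) (by omega)]
      · show sol s n m x' (Γ n + 1) _ + sol s n m x' (Γ n + 1) _ = sol s n m x' (Γ n + 1) _
        rw [sol_tv s n m h x' _ m hm le_rfl, sol_wv s n m h]
        omega
      · by_cases hp : n % 2 = 0
        · rw [if_pos hp] at hif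
          subst hif
          show sol s n m x' (Γ n + 1) _ + sol s n m x' (Γ n + 1) _ = sol s n m x' (Γ n + 1) _
          rw [sol_yv s n m h]
          omega
        · rw [if_neg hp] at hif
          subst hif
          show sol s n m x' (Γ n + 1) _ = 1
          rw [sol_yv s n m h]
          omega
      · show sol s n m x' (Γ n + 1) _ + sol s n m x' (Γ n + 1) _ = sol s n m x' (Γ n + 1) _
        rw [sol_wv s n m h, sol_yv s n m h, sol_emb s n m h]
        rw [hx'0]; omega
      · show sol s n m x' (Γ n + 1) _ + sol s n m x' (Γ n + 1) _ = sol s n m x' (Γ n + 1) _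
        rw [sol_emb s n m h, sol_tv s n m h x' _ 1 le_rfl hm,
            sol_uv s n m h, hx'1]
  -- every solution has a coordinate equal to Γ n + 1
  have hforce : ∀ x : Fin n → ℕ, Solves x (mySys s n m h Φ) → ∃ i, x i = Γ n + 1 := by
    intro x hx
    have ht1 : x (tv s n m h 1) = 1 := hx _ (Or.inr (Or.inl rfl))
    have ht : ∀ i, 1 ≤ i → i ≤ m → x (tv s n m h i) = i := by
      intro i
      induction i with
      | zero => omega
      | succ i ih =>
        intro _ hle
        by_cases hi0 : i = 0
        · subst hi0; exact ht1
        · have hi1 : 1 ≤ i := by omega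
          have heqn : x (tv s n m h i) + x (tv s n m h 1) = x (tv s n m h (i+1)) :=
            hx _ (Or.inr (Or.inr (Or.inl ⟨i, hi1, by omega, rfl⟩)))
          rw [ih hi1 (by omega), ht1] at heqn
          omega
    have hw : x (wv s n m h) = 2 * m := by
      have heqn : x (tv s n m h m) + x (tv s n m h m) = x (wv s n m h) :=
        hx _ (Or.inr (Or.inr (Or.inr (Or.inl rfl))))
      rw [ht m hm le_rfl] at heqn
      omega
    have hy : x (yv s n m h) = n - 2 * m := by
      have hmem := hx _ (Or.inr (Or.inr (Or.inr (Or.inr (Or.inl rfl)))))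
      by_cases hp : n % 2 = 0
      · rw [if_pos hp] at hmem
        have h2 : x (yv s n m h) + x (yv s n m h) = x (yv s n m h) := hmem
        omega
      · rw [if_neg hp] at hmem
        have h2 : x (yv s n m h) = 1 := hmem
        omega
    have hx0 : x (embF s n m h ⟨0, by omega⟩) = n := by
      have hmem : x (wv s n m h) + x (yv s n m h) = x (embF s n m h ⟨0, by omega⟩) :=
        hx _ (Or.inr (Or.inr (Or.inr (Or.inr (Or.inr (Or.inl rfl))))))
      rw [hw, hy] at hmem
      omega
    have hrest : Solves (x ∘ embF s n m h) Φ := by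
      intro e he
      have hmem : (Eqn.map (embF s n m h) e).holds x := hx _ (Or.inl ⟨e, he, rfl⟩)
      cases e <;> exact hmem
    have hΓ : Γ n = x (embF s n m h ⟨1, by omega⟩) :=
      (hrep n _ hn0).mpr ⟨x ∘ embF s n m h, hx0, rfl, hrest⟩
    have hu : x (uv s n m h) = Γ n + 1 := by
      have hmem : x (embF s n m h ⟨1, by omega⟩) + x (tv s n m h 1) = x (uv s n m h) :=
        hx _ (Or.inr (Or.inr (Or.inr (Or.inr (Or.inr (Or.inr rfl))))))
      rw [ht1, ← hΓ] at hmem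
      omega
    exact ⟨_, hu⟩
  refine ⟨⟨mySys s n m h Φ, ⟨_, hsolS⟩, hforce⟩, ?_⟩
  refine le_csInf (exists_isBound n) ?_
  intro b hb
  obtain ⟨y, hyS, hyb⟩ := hb (mySys s n m h Φ) ⟨_, hsolS⟩
  obtain ⟨i, hi⟩ := hforce y hyS
  exact hi ▸ hyb i
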